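/- Let δ ∈ (0,1), c > 0 and M > 0, and let {w^k}, {ẇ^k}, {ẅ^k} be sequences of real numbers with w^k ≥ c, |ẇ^k| ≤ M, and |ẅ^k| ≤ M for all k. Then there exists ᾱ ∈ (0, π/2] such that for every k and every α ∈ [0, ᾱ], w^k − ẇ^k sin α + ẅ^k (1 − cos α) ≥ δ w^k. -/
import Mathlib


/-- If the components `wᵏ` are bounded below away from zero and the arc derivatives
`ẇᵏ, ẅᵏ` are bounded, then there is a uniform step angle `ᾱ ∈ (0, π/2]` such that
`wᵏ − ẇᵏ sin α + ẅᵏ (1 − cos α) ≥ δ wᵏ` for all `k` and all `α ∈ [0, ᾱ]`. -/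
theorem uniform_step_angle (δ c M : ℝ)
    (hδ : δ ∈ Set.Ioo (0 : ℝ) 1) (hc : 0 < c) (hM : 0 < M)
    (w wdot wddot : ℕ → ℝ)
    (hw : ∀ k, c ≤ w k) (hwdot : ∀ k, |wdot k| ≤ M) (hwddot : ∀ k, |wddot k| ≤ M) :
    ∃ αbar ∈ Set.Ioc (0 : ℝ) (Real.pi / 2),
      ∀ k, ∀ α ∈ Set.Icc (0 : ℝ) αbar,
        δ * w k ≤ w k - wdot k * Real.sin α + wddot k * (1 - Real.cos α) := by
  obtain ⟨hδ0, hδ1⟩ := hδ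
  have hpi := Real.pi_pos
  refine ⟨min (Real.pi / 2) ((1 - δ) * c / (2 * M)), ⟨?_, min_le_left _ _⟩, ?_⟩
  · exact lt_min (by linarith) (div_pos (mul_pos (by linarith) hc) (by positivity))
  intro k α ⟨hα0, hα1⟩
  have hαpi : α ≤ Real.pi / 2 := hα1.trans (min_le_left _ _)
  have hαM : α ≤ (1 - δ) * c / (2 * M) := hα1.trans (min_le_right _ _)
  have hMα : 2 * M * α ≤ (1 - δ) * c := by
    rw [le_div_iff₀ (by positivity)] at hαM
    linarith [hαM]
  -- bounds on sin and 1 - cos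
  have hsin_le : Real.sin α ≤ α := Real.sin_le hα0
  have hsin_nonneg : 0 ≤ Real.sin α :=
    Real.sin_nonneg_of_nonneg_of_le_pi hα0 (by linarith)
  have hcos : 1 - Real.cos α ≤ α := by
    have h2 : Real.cos α = 1 - 2 * Real.sin (α / 2) ^ 2 := by
      have h := Real.cos_two_mul (α / 2)
      rw [mul_div_cancel₀ α two_ne_zero] at h
      nlinarith [Real.sin_sq_add_cos_sq (α / 2)]
    have hs2 : Real.sin (α / 2) ≤ α / 2 := Real.sin_le (by linarith)
    have hs2n : 0 ≤ Real.sin (α / 2) :=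
      Real.sin_nonneg_of_nonneg_of_le_pi (by linarith) (by linarith)
    have hs1 : Real.sin (α / 2) ≤ 1 := Real.sin_le_one _
    nlinarith [sq_nonneg (Real.sin (α / 2))]
  have hcos_nonneg : 0 ≤ 1 - Real.cos α := by linarith [Real.cos_le_one α]
  have h1 : wdot k * Real.sin α ≤ M * α := by
    calc wdot k * Real.sin α ≤ |wdot k| * Real.sin α :=
          mul_le_mul_of_nonneg_right (le_abs_self _) hsin_nonneg
      _ ≤ M * α := mul_le_mul (hwdot k) hsin_le hsin_nonneg hM.le
  have h2 : - (M * α) ≤ wddot k * (1 - Real.cos α) := by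
    have : -wddot k * (1 - Real.cos α) ≤ M * α := by
      calc -wddot k * (1 - Real.cos α) ≤ |(-wddot k)| * (1 - Real.cos α) :=
            mul_le_mul_of_nonneg_right (le_abs_self _) hcos_nonneg
        _ = |wddot k| * (1 - Real.cos α) := by rw [abs_neg]
        _ ≤ M * α := mul_le_mul (hwddot k) hcos hcos_nonneg hM.le
    linarith
  have hwk := hw k
  nlinarith [hwk, hMα, h1, h2]
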